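/- Let (X, τ, 𝒫) be a compact and tight general space and let R_τ be the specialization preorder of X. Then for every x ∈ X, R_τ(x) = ⋂{A ∈ 𝒫 ∩ τ : x ∈ A}, and for every A ∈ 𝒫, the topological closure of A equals R_τ⁻¹(A). -/

import Mathlib

open Set TopologicalSpace

/-- Let `(X, τ, 𝒫)` be a compact and tight general space and let `R_τ` be the
specialization preorder of `X` (`x R_τ y` iff `x ∈ closure {y}`). Then for every `x ∈ X`,
`R_τ(x) = ⋂ {A ∈ 𝒫 ∩ τ : x ∈ A}`, and for every `A ∈ 𝒫` the topological closure of `A`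
equals `R_τ⁻¹(A)`. -/
theorem statement0 {X : Type*} [TopologicalSpace X] (P : Set (Set X))
    (hempty : (∅ : Set X) ∈ P) (huniv : (univ : Set X) ∈ P)
    (hunion : ∀ A ∈ P, ∀ B ∈ P, A ∪ B ∈ P)
    (hcompl : ∀ A ∈ P, Aᶜ ∈ P)
    (hclosure : ∀ A ∈ P, closure A ∈ P)
    (hcompact : ∀ F ⊆ P, (∀ G ⊆ F, G.Finite → (⋂₀ G).Nonempty) → (⋂₀ F).Nonempty)
    (htight : IsTopologicalBasis {A | A ∈ P ∧ IsOpen A}) :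
    (∀ x : X, {y : X | x ∈ closure {y}} = ⋂₀ {A | A ∈ P ∧ IsOpen A ∧ x ∈ A}) ∧
    (∀ A ∈ P, closure A = {x : X | ∃ y ∈ A, x ∈ closure {y}}) := by
  have key : ∀ x y : X, x ∈ closure ({y} : Set X) ↔
      ∀ A, A ∈ P → IsOpen A → x ∈ A → y ∈ A := by
    intro x y
    constructor
    · intro h A hAP hAo hxA
      rcases mem_closure_iff.1 h A hAo hxA with ⟨z, hzA, hzy⟩
      rw [mem_singleton_iff] at hzy
      exact hzy ▸ hzA
    · intro h
      rw [mem_closure_iff]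
      intro o ho hxo
      rcases htight.exists_subset_of_mem_open hxo ho with ⟨A, ⟨hAP, hAo⟩, hxA, hAsub⟩
      exact ⟨y, hAsub (h A hAP hAo hxA), rfl⟩
  constructor
  · intro x
    ext y
    simp only [mem_setOf_eq, mem_sInter, key]
    constructor
    · intro h A ⟨hAP, hAo, hxA⟩; exact h A hAP hAo hxA
    · intro h A hAP hAo hxA; exact h A ⟨hAP, hAo, hxA⟩
  · intro A hA
    ext x
    simp only [mem_setOf_eq]
    constructor
    · intro hx
      set S : Set (Set X) := {B | B ∈ P ∧ IsOpen B ∧ x ∈ B} with hS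
      have hFP : insert A S ⊆ P := by
        rintro B (rfl | hB)
        · exact hA
        · exact hB.1
      have hFIP : ∀ G ⊆ insert A S, G.Finite → (⋂₀ G).Nonempty := by
        intro G hG hGfin
        have hG' : ∀ B ∈ G \ {A}, B ∈ S := by
          rintro B ⟨hBG, hBA⟩
          rcases hG hBG with rfl | h
          · exact absurd rfl hBA
          · exact h
        have hUopen : IsOpen (⋂₀ (G \ {A})) :=
          Set.Finite.isOpen_sInter (hGfin.diff (t := {A})) (fun B hB => (hG' B hB).2.1)
        have hxU : x ∈ ⋂₀ (G \ {A}) := fun B hB => (hG' B hB).2.2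
        rcases mem_closure_iff.1 hx _ hUopen hxU with ⟨z, hzU, hzA⟩
        refine ⟨z, fun B hB => ?_⟩
        by_cases hBA : B = A
        · exact hBA ▸ hzA
        · exact hzU B ⟨hB, hBA⟩
      rcases hcompact _ hFP hFIP with ⟨y, hy⟩
      refine ⟨y, hy A (mem_insert _ _), ?_⟩
      exact (key x y).2 fun B hBP hBo hxB => hy B (mem_insert_of_mem _ ⟨hBP, hBo, hxB⟩)
    · rintro ⟨y, hyA, hxy⟩
      exact closure_mono (singleton_subset_iff.2 hyA) hxy
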